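/- Let (Ω, P) be a probability space, let a < b be integers, and let s : Ω → ℤ be measurable with a ≤ s ≤ b almost surely and P(s = j) > 0 for every j ∈ {a, …, b}. Let Y : Ω → ℝ be integrable. Then Var(s) > 0, and the population least-squares slope decomposes as a weighted sum of consecutive two-point differences: Cov(Y, s)/Var(s) = Σ_{i=a+1}^{b} μ_i · (E[Y | s = i] − E[Y | s = i−1]), where μ_i := (Σ_{j=i}^{b} P(s = j)·(j − E[s])) / (Σ_{j=a}^{b} P(s = j)·(j − a)·(j − E[s])). -/

import Mathlib

open MeasureTheory

/-- Conditional expectation of `Y` given the event `{ω | s ω = u}`: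
`E[Y | s = u] = (∫_{s = u} Y dP) / P(s = u)`. -/
noncomputable def condExpEvent {Ω : Type*} [MeasurableSpace Ω] (P : Measure Ω)
    (Y : Ω → ℝ) (s : Ω → ℤ) (u : ℤ) : ℝ :=
  (∫ ω in {ω | s ω = u}, Y ω ∂P) / (P {ω | s ω = u}).toReal

/-- Covariance: `Cov(U, V) = E[U·V] − E[U]·E[V]`. -/
noncomputable def cov {Ω : Type*} [MeasurableSpace Ω] (P : Measure Ω) (U V : Ω → ℝ) : ℝ :=
  ∫ ω, U ω * V ω ∂P - (∫ ω, U ω ∂P) * (∫ ω, V ω ∂P)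

/-- The population weight
`μ_i = (Σ_{j=i}^{b} P(s = j)·(j − E[s])) / (Σ_{j=a}^{b} P(s = j)·(j − a)·(j − E[s]))`. -/
noncomputable def popWeight {Ω : Type*} [MeasurableSpace Ω] (P : Measure Ω)
    (s : Ω → ℤ) (a b i : ℤ) : ℝ :=
  (∑ j ∈ Finset.Icc i b, (P {ω | s ω = j}).toReal * ((j : ℝ) - ∫ ω, (s ω : ℝ) ∂P)) /
  (∑ j ∈ Finset.Icc a b,
    (P {ω | s ω = j}).toReal * ((j : ℝ) - (a : ℝ)) * ((j : ℝ) - ∫ ω, (s ω : ℝ) ∂P))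


lemma icc_insert_left (a b : ℤ) (h : a ≤ b) :
    Finset.Icc a b = insert a (Finset.Icc (a+1) b) := by
  ext x; simp only [Finset.mem_Icc, Finset.mem_insert]; omega

lemma telescope (g : ℤ → ℝ) (a j : ℤ) (hj : a ≤ j) :
    ∑ i ∈ Finset.Icc (a+1) j, (g i - g (i-1)) = g j - g a := by
  refine Int.le_induction
    (motive := fun j _ => ∑ i ∈ Finset.Icc (a+1) j, (g i - g (i-1)) = g j - g a) ?_ ?_ j hj
  · simp
  · intro n hn ih
    have hins : Finset.Icc (a+1) (n+1) = insert (n+1) (Finset.Icc (a+1) n) := by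
      ext x; simp only [Finset.mem_Icc, Finset.mem_insert]; omega
    rw [hins, Finset.sum_insert (by simp only [Finset.mem_Icc]; omega), ih]
    have : (n + 1 - 1 : ℤ) = n := by ring
    rw [this]; ring

lemma key_alg (a b : ℤ) (hab : a < b) (p m : ℤ → ℝ)
    (hp : ∀ j ∈ Finset.Icc a b, 0 < p j)
    (h1 : ∑ j ∈ Finset.Icc a b, p j = 1) (E : ℝ)
    (hE : E = ∑ j ∈ Finset.Icc a b, p j * j) :
    0 < ∑ j ∈ Finset.Icc a b, p j * j * j - E * E ∧
    (∑ j ∈ Finset.Icc a b, m j * j - (∑ j ∈ Finset.Icc a b, m j) * E) /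
        (∑ j ∈ Finset.Icc a b, p j * j * j - E * E) =
      ∑ i ∈ Finset.Icc (a+1) b,
        ((∑ j ∈ Finset.Icc i b, p j * ((j : ℝ) - E)) /
          (∑ j ∈ Finset.Icc a b, p j * ((j : ℝ) - a) * ((j : ℝ) - E))) *
        (m i / p i - m (i-1) / p (i-1)) := by
  have hab' : a ≤ b := le_of_lt hab
  -- V in centered form
  have hV : (∑ j ∈ Finset.Icc a b, p j * ((j:ℝ) - E)^2)
      = ∑ j ∈ Finset.Icc a b, p j * j * j - E * E := by
    have : ∀ j ∈ Finset.Icc a b, p j * ((j:ℝ) - E)^2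
        = p j * j * j - 2*E*(p j * j) + E*E*(p j) := by intro j _; ring
    rw [Finset.sum_congr rfl this]
    rw [Finset.sum_add_distrib, Finset.sum_sub_distrib, ← Finset.mul_sum, ← Finset.mul_sum,
      ← hE, h1]
    ring
  have hsum0 : ∑ j ∈ Finset.Icc a b, p j * ((j:ℝ) - E) = 0 := by
    have : ∀ j ∈ Finset.Icc a b, p j * ((j:ℝ) - E) = p j * j - E * p j := by
      intro j _; ring
    rw [Finset.sum_congr rfl this, Finset.sum_sub_distrib, ← Finset.mul_sum, ← hE, h1]
    ring
  -- positivity of V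
  have hVpos : 0 < ∑ j ∈ Finset.Icc a b, p j * ((j:ℝ) - E)^2 := by
    apply Finset.sum_pos'
    · intro j hj; exact mul_nonneg (hp j hj).le (sq_nonneg _)
    · by_cases hEa : (a:ℝ) = E
      · refine ⟨b, Finset.mem_Icc.2 ⟨hab', le_refl b⟩, ?_⟩
        have hne : (b:ℝ) - E ≠ 0 := by
          rw [← hEa]
          have : (a:ℝ) < b := by exact_mod_cast hab
          intro h; nlinarith
        exact mul_pos (hp b (Finset.mem_Icc.2 ⟨hab', le_refl b⟩)) (by positivity)
      · refine ⟨a, Finset.mem_Icc.2 ⟨le_refl a, hab'⟩, ?_⟩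
        have hne : (a:ℝ) - E ≠ 0 := sub_ne_zero.2 hEa
        exact mul_pos (hp a (Finset.mem_Icc.2 ⟨le_refl a, hab'⟩)) (by positivity)
  have hVpos' : 0 < ∑ j ∈ Finset.Icc a b, p j * j * j - E * E := hV ▸ hVpos
  refine ⟨hVpos', ?_⟩
  -- denominator equals V
  have hD : (∑ j ∈ Finset.Icc a b, p j * ((j:ℝ) - a) * ((j:ℝ) - E))
      = ∑ j ∈ Finset.Icc a b, p j * ((j:ℝ) - E)^2 := by
    have : ∀ j ∈ Finset.Icc a b, p j * ((j:ℝ) - a) * ((j:ℝ) - E)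
        = p j * ((j:ℝ) - E)^2 + (E - a) * (p j * ((j:ℝ) - E)) := by intro j _; ring
    rw [Finset.sum_congr rfl this, Finset.sum_add_distrib, ← Finset.mul_sum, hsum0]
    ring
  -- the main swap identity
  set g : ℤ → ℝ := fun i => m i / p i with hg
  have hB : ∑ i ∈ Finset.Icc (a+1) b,
      (∑ j ∈ Finset.Icc i b, p j * ((j:ℝ) - E)) * (g i - g (i-1))
      = ∑ j ∈ Finset.Icc a b, m j * j - (∑ j ∈ Finset.Icc a b, m j) * E := by
    have step1 : ∀ i, (∑ j ∈ Finset.Icc i b, p j * ((j:ℝ) - E)) * (g i - g (i-1))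
        = ∑ j ∈ Finset.Icc i b, p j * ((j:ℝ) - E) * (g i - g (i-1)) := by
      intro i; rw [Finset.sum_mul]
    rw [Finset.sum_congr rfl (fun i _ => step1 i)]
    rw [Finset.sum_comm' (s' := fun j => Finset.Icc (a+1) j) (t' := Finset.Icc (a+1) b)
      (by intro i j; simp only [Finset.mem_Icc]; omega)]
    have step2 : ∀ j ∈ Finset.Icc (a+1) b,
        (∑ i ∈ Finset.Icc (a+1) j, p j * ((j:ℝ) - E) * (g i - g (i-1)))
        = p j * ((j:ℝ) - E) * (g j - g a) := by
      intro j hj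
      rw [← Finset.mul_sum, telescope g a j (by simp only [Finset.mem_Icc] at hj; omega)]
    rw [Finset.sum_congr rfl step2]
    -- expand and regroup
    have split : ∀ F : ℤ → ℝ, ∑ j ∈ Finset.Icc a b, F j = F a + ∑ j ∈ Finset.Icc (a+1) b, F j := by
      intro F
      rw [icc_insert_left a b hab', Finset.sum_insert (by simp only [Finset.mem_Icc]; omega)]
    have hpg : ∀ j ∈ Finset.Icc a b, p j * ((j:ℝ) - E) * g j = m j * ((j:ℝ) - E) := by
      intro j hj
      have hpj : p j ≠ 0 := (hp j hj).ne'
      rw [hg]; field_simp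
    have expand : ∀ j, p j * ((j:ℝ) - E) * (g j - g a)
        = p j * ((j:ℝ) - E) * g j - (p j * ((j:ℝ) - E)) * g a := by intro j; ring
    rw [Finset.sum_congr rfl (fun j _ => expand j), Finset.sum_sub_distrib, ← Finset.sum_mul]
    have h2 : ∑ j ∈ Finset.Icc (a+1) b, p j * ((j:ℝ) - E) = - (p a * ((a:ℝ) - E)) := by
      have := split (fun j => p j * ((j:ℝ) - E))
      rw [this] at hsum0; linarith
    rw [h2]
    have h3 : ∑ j ∈ Finset.Icc (a+1) b, p j * ((j:ℝ) - E) * g j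
        = (∑ j ∈ Finset.Icc a b, p j * ((j:ℝ) - E) * g j) - p a * ((a:ℝ) - E) * g a := by
      have := split (fun j => p j * ((j:ℝ) - E) * g j)
      rw [this]; ring
    rw [h3, Finset.sum_congr rfl hpg]
    have h4 : ∑ j ∈ Finset.Icc a b, m j * ((j:ℝ) - E)
        = ∑ j ∈ Finset.Icc a b, m j * j - (∑ j ∈ Finset.Icc a b, m j) * E := by
      have : ∀ j ∈ Finset.Icc a b, m j * ((j:ℝ) - E) = m j * j - (m j) * E := by
        intro j _; ring
      rw [Finset.sum_congr rfl this, Finset.sum_sub_distrib, ← Finset.sum_mul]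
    rw [h4]; ring
  -- conclude
  rw [hD, hV]
  have hVne : (∑ j ∈ Finset.Icc a b, p j * j * j - E * E) ≠ 0 := ne_of_gt hVpos'
  rw [← hB]
  rw [Finset.sum_div]
  apply Finset.sum_congr rfl
  intro i _
  rw [div_mul_eq_mul_div]


lemma integral_eq_sum_aux {Ω : Type*} [MeasurableSpace Ω] (P : Measure Ω) [IsProbabilityMeasure P]
    (a b : ℤ) (s : Ω → ℤ) (hs : Measurable s)
    (hrange : ∀ᵐ ω ∂P, a ≤ s ω ∧ s ω ≤ b)
    (f : Ω → ℝ) (hf : Integrable f P) :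
    ∫ ω, f ω ∂P = ∑ j ∈ Finset.Icc a b, ∫ ω in {ω | s ω = j}, f ω ∂P := by
  have hmeas : ∀ j : ℤ, MeasurableSet {ω | s ω = j} :=
    fun j => hs (measurableSet_singleton j)
  have hU : (⋃ j ∈ Finset.Icc a b, {ω | s ω = j}) =ᵐ[P] Set.univ := by
    rw [ae_eq_univ]
    have h : ∀ᵐ ω ∂P, ω ∈ ⋃ j ∈ Finset.Icc a b, {ω | s ω = j} := by
      filter_upwards [hrange] with ω hω
      simp only [Set.mem_iUnion, Set.mem_setOf_eq]
      exact ⟨s ω, Finset.mem_Icc.2 hω, rfl⟩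
    rwa [ae_iff] at h
  calc ∫ ω, f ω ∂P = ∫ ω in ⋃ j ∈ Finset.Icc a b, {ω | s ω = j}, f ω ∂P := by
        rw [← setIntegral_univ (μ := P) (f := f), setIntegral_congr_set hU.symm]
    _ = ∑ j ∈ Finset.Icc a b, ∫ ω in {ω | s ω = j}, f ω ∂P := by
        apply integral_biUnion_finset _ (fun j _ => hmeas j) _ (fun j _ => hf.integrableOn)
        intro i _ j _ hij
        simp only [Function.onFun, Set.disjoint_left]
        intro ω h1 h2
        exact hij (h1.symm.trans h2)

theorem stmt_3 {Ω : Type*} [MeasurableSpace Ω] (P : Measure Ω) [IsProbabilityMeasure P]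
    (a b : ℤ) (hab : a < b) (s : Ω → ℤ) (hs : Measurable s)
    (hrange : ∀ᵐ ω ∂P, a ≤ s ω ∧ s ω ≤ b)
    (hpos : ∀ j ∈ Finset.Icc a b, 0 < P {ω | s ω = j})
    (Y : Ω → ℝ) (hY : Integrable Y P) :
    0 < cov P (fun ω => (s ω : ℝ)) (fun ω => (s ω : ℝ)) ∧
    cov P Y (fun ω => (s ω : ℝ)) / cov P (fun ω => (s ω : ℝ)) (fun ω => (s ω : ℝ)) =
      ∑ i ∈ Finset.Icc (a + 1) b, popWeight P s a b i *
        (condExpEvent P Y s i - condExpEvent P Y s (i - 1)) := by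

  have hmeas : ∀ j : ℤ, MeasurableSet {ω | s ω = j} :=
    fun j => hs (measurableSet_singleton j)
  have hsm : Measurable (fun ω => (s ω : ℝ)) := measurable_from_top.comp hs
  set C : ℝ := max |(a:ℝ)| |(b:ℝ)| with hC
  have hbd : ∀ᵐ ω ∂P, ‖(s ω : ℝ)‖ ≤ C := by
    filter_upwards [hrange] with ω ⟨h1, h2⟩
    have h1' : (a:ℝ) ≤ s ω := by exact_mod_cast h1
    have h2' : (s ω : ℝ) ≤ b := by exact_mod_cast h2
    rw [Real.norm_eq_abs, abs_le]
    constructor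
    · have := neg_abs_le (a:ℝ); have := le_max_left |(a:ℝ)| |(b:ℝ)|; linarith
    · have := le_abs_self (b:ℝ); have := le_max_right |(a:ℝ)| |(b:ℝ)|; linarith
  have ints : Integrable (fun ω => (s ω : ℝ)) P :=
    Integrable.mono' (integrable_const C) hsm.aestronglyMeasurable hbd
  have intss : Integrable (fun ω => (s ω : ℝ) * (s ω : ℝ)) P := by
    refine Integrable.mono' (integrable_const (C * C))
      (hsm.mul hsm).aestronglyMeasurable ?_
    filter_upwards [hbd] with ω hω
    have h0 : (0:ℝ) ≤ ‖(s ω : ℝ)‖ := norm_nonneg _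
    calc ‖(s ω : ℝ) * (s ω : ℝ)‖ = ‖(s ω : ℝ)‖ * ‖(s ω : ℝ)‖ := norm_mul _ _
      _ ≤ C * C := mul_le_mul hω hω h0 (le_trans h0 hω)
  have intYs : Integrable (fun ω => Y ω * (s ω : ℝ)) P := by
    refine Integrable.mono' (hY.abs.mul_const C)
      (hY.aestronglyMeasurable.mul hsm.aestronglyMeasurable) ?_
    filter_upwards [hbd] with ω hω
    calc ‖Y ω * (s ω : ℝ)‖ = |Y ω| * ‖(s ω : ℝ)‖ := norm_mul _ _
      _ ≤ |Y ω| * C := mul_le_mul_of_nonneg_left hω (abs_nonneg _)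
  set p : ℤ → ℝ := fun j => (P {ω | s ω = j}).toReal with hpdef
  set m : ℤ → ℝ := fun j => ∫ ω in {ω | s ω = j}, Y ω ∂P with hmdef
  have hp : ∀ j ∈ Finset.Icc a b, 0 < p j := fun j hj =>
    ENNReal.toReal_pos (hpos j hj).ne' (measure_ne_top P _)
  have h1 : ∑ j ∈ Finset.Icc a b, p j = 1 := by
    have := integral_eq_sum_aux P a b s hs hrange (fun _ => (1:ℝ)) (integrable_const 1)
    simpa [setIntegral_const, hpdef, measureReal_def] using this.symm
  have hEs : ∫ ω, (s ω : ℝ) ∂P = ∑ j ∈ Finset.Icc a b, p j * j := by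
    rw [integral_eq_sum_aux P a b s hs hrange _ ints]
    refine Finset.sum_congr rfl fun j _ => ?_
    rw [setIntegral_congr_fun (hmeas j) (g := fun _ => (j:ℝ))
      (fun ω hω => by show ((s ω : ℤ) : ℝ) = ((j:ℤ) : ℝ); exact_mod_cast congrArg (Int.cast : ℤ → ℝ) hω)]
    rw [setIntegral_const, smul_eq_mul]
    rfl
  have hss : ∫ ω, (s ω : ℝ) * (s ω : ℝ) ∂P = ∑ j ∈ Finset.Icc a b, p j * j * j := by
    rw [integral_eq_sum_aux P a b s hs hrange _ intss]
    refine Finset.sum_congr rfl fun j _ => ?_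
    rw [setIntegral_congr_fun (hmeas j) (g := fun _ => (j:ℝ) * (j:ℝ))
      (fun ω hω => by have : (s ω : ℝ) = j := by exact_mod_cast congrArg (Int.cast : ℤ → ℝ) hω
                      rw [this])]
    rw [setIntegral_const, smul_eq_mul]; change p j * _ = _; ring
  have hYc : ∫ ω, Y ω ∂P = ∑ j ∈ Finset.Icc a b, m j :=
    integral_eq_sum_aux P a b s hs hrange _ hY
  have hYsc : ∫ ω, Y ω * (s ω : ℝ) ∂P = ∑ j ∈ Finset.Icc a b, m j * j := by
    rw [integral_eq_sum_aux P a b s hs hrange _ intYs]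
    refine Finset.sum_congr rfl fun j _ => ?_
    rw [setIntegral_congr_fun (hmeas j) (g := fun ω => Y ω * (j:ℝ))
      (fun ω hω => by have : (s ω : ℝ) = j := by exact_mod_cast congrArg (Int.cast : ℤ → ℝ) hω
                      rw [this])]
    rw [integral_mul_const]
  obtain ⟨hposV, heq⟩ := key_alg a b hab p m hp h1 (∫ ω, (s ω : ℝ) ∂P) hEs
  constructor
  · simp only [cov]
    rw [hss]
    exact hposV
  · simp only [cov, condExpEvent, popWeight]
    rw [hss, hYc, hYsc]
    exact heq
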